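/- Let λ₁, λ₂, λ₃ be real numbers with λ₂ ≠ λ₃, let A = diag(λ₁, λ₂, λ₃), and let b₁ = (0,1,1)ᵀ and b₂ = (1,0,0)ᵀ be the columns of the 3×2 matrix B. Then: (i) the pair (A, B) is controllable, i.e., the six vectors A^j *ᵥ b_i for j ∈ {0,1,2}, i ∈ {1,2} span ℝ³; but (ii) the 3×3 matrix whose columns are b₁, A *ᵥ b₂, and A² *ᵥ b₂ has determinant zero, so the channel sequence that uses channel 2 at the first two steps and channel 1 at the last step (a sequence in which both channels appear) does not produce a spanning family. In particular the system is not random channel controllable. -/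

import Mathlib

noncomputable def φ93201 : (Fin 3 → ℝ) →ₗ[ℝ] ℝ :=
  LinearMap.proj (R := ℝ) (φ := fun _ : Fin 3 => ℝ) 1
    - LinearMap.proj (R := ℝ) (φ := fun _ : Fin 3 => ℝ) 2


theorem stmt_9 (l1 l2 l3 : ℝ) (h23 : l2 ≠ l3) :
    -- A = diag(λ₁, λ₂, λ₃), b₁ = (0,1,1)ᵀ, b₂ = (1,0,0)ᵀ
    (Submodule.span ℝ
        (Set.range fun p : Fin 3 × Fin 2 =>
          (Matrix.diagonal ![l1, l2, l3] ^ (p.1 : ℕ)).mulVec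
            (![![(0 : ℝ), 1, 1], ![1, 0, 0]] p.2)) = ⊤) ∧
      -- the 3×3 matrix with columns b₁, A b₂, A² b₂ has determinant zero
      (Matrix.det
          (Matrix.of ![![(0 : ℝ), 1, 1],
            (Matrix.diagonal ![l1, l2, l3]).mulVec ![1, 0, 0],
            (Matrix.diagonal ![l1, l2, l3] ^ 2).mulVec ![1, 0, 0]]).transpose = 0) ∧
      -- hence the channel sequence using channel 2 twice then channel 1 does not span
      Submodule.span ℝ
          (Set.range fun j : Fin 3 =>
            (Matrix.diagonal ![l1, l2, l3] ^ (j : ℕ)).mulVec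
              (![![(0 : ℝ), 1, 1], ![1, 0, 0]] (![0, 1, 1] j))) ≠ ⊤ := by
  have key : ∀ (k : ℕ) (w : Fin 3 → ℝ),
      (Matrix.diagonal ![l1, l2, l3] ^ k).mulVec w
        = fun i => ![l1, l2, l3] i ^ k * w i := by
    intro k w
    ext i
    simp [Matrix.diagonal_pow, Matrix.mulVec_diagonal]
  have hd : l3 - l2 ≠ 0 := sub_ne_zero.mpr (Ne.symm h23)
  refine ⟨?_, ?_, ?_⟩
  · set S : Set (Fin 3 → ℝ) := Set.range fun p : Fin 3 × Fin 2 =>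
          (Matrix.diagonal ![l1, l2, l3] ^ (p.1 : ℕ)).mulVec
            (![![(0 : ℝ), 1, 1], ![1, 0, 0]] p.2) with hS
    have m1 : (![(0:ℝ),1,1] : Fin 3 → ℝ) ∈ Submodule.span ℝ S := by
      refine Submodule.subset_span ⟨(0, 0), ?_⟩
      simp only [key]; ext i; fin_cases i <;> norm_num
    have m2 : (![(0:ℝ),l2,l3] : Fin 3 → ℝ) ∈ Submodule.span ℝ S := by
      refine Submodule.subset_span ⟨(1, 0), ?_⟩
      simp only [key]; ext i; fin_cases i <;> norm_num
    have m3 : (![(1:ℝ),0,0] : Fin 3 → ℝ) ∈ Submodule.span ℝ S := by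
      refine Submodule.subset_span ⟨(0, 1), ?_⟩
      simp only [key]; ext i; fin_cases i <;> norm_num
    have e1 : (![(0:ℝ),1,0] : Fin 3 → ℝ) ∈ Submodule.span ℝ S := by
      have : (![(0:ℝ),1,0] : Fin 3 → ℝ)
          = (l3 / (l3 - l2)) • ![(0:ℝ),1,1] - (1 / (l3 - l2)) • ![(0:ℝ),l2,l3] := by
        ext i; fin_cases i <;> simp <;> field_simp <;> ring
      rw [this]
      exact Submodule.sub_mem _ (Submodule.smul_mem _ _ m1) (Submodule.smul_mem _ _ m2)
    have e2 : (![(0:ℝ),0,1] : Fin 3 → ℝ) ∈ Submodule.span ℝ S := by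
      have : (![(0:ℝ),0,1] : Fin 3 → ℝ)
          = (1 / (l3 - l2)) • ![(0:ℝ),l2,l3] - (l2 / (l3 - l2)) • ![(0:ℝ),1,1] := by
        ext i; fin_cases i <;> simp <;> field_simp <;> ring
      rw [this]
      exact Submodule.sub_mem _ (Submodule.smul_mem _ _ m2) (Submodule.smul_mem _ _ m1)
    rw [Submodule.eq_top_iff']
    intro x
    have hx : x = x 0 • ![(1:ℝ),0,0] + x 1 • ![(0:ℝ),1,0] + x 2 • ![(0:ℝ),0,1] := by
      ext i; fin_cases i <;> simp
    rw [hx]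
    exact Submodule.add_mem _ (Submodule.add_mem _ (Submodule.smul_mem _ _ m3)
      (Submodule.smul_mem _ _ e1)) (Submodule.smul_mem _ _ e2)
  · rw [Matrix.det_transpose]
    simp [Matrix.det_fin_three, Matrix.mulVec_diagonal, Matrix.diagonal_pow]
  · intro h
    set S : Set (Fin 3 → ℝ) := Set.range fun j : Fin 3 =>
            (Matrix.diagonal ![l1, l2, l3] ^ (j : ℕ)).mulVec
              (![![(0 : ℝ), 1, 1], ![1, 0, 0]] (![0, 1, 1] j)) with hS
    have hker : Submodule.span ℝ S ≤ LinearMap.ker φ93201 := by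
      rw [Submodule.span_le]
      rintro _ ⟨j, rfl⟩
      simp only [key, SetLike.mem_coe, LinearMap.mem_ker]
      fin_cases j <;>
        simp [φ93201, LinearMap.sub_apply, LinearMap.proj_apply]
    have hx : (![(0:ℝ),1,0] : Fin 3 → ℝ) ∈ Submodule.span ℝ S := by
      rw [h]; trivial
    have h2 := hker hx
    simp [φ93201, LinearMap.sub_apply, LinearMap.proj_apply] at h2
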